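/- arXiv:2512.24616 — 2 statements merged into one kernel-verified Lean document; each statement's English description precedes it below -/
import Mathlib

section
/- For λ₁ ∈ (0,1] and λ₂ ∈ [0,1] with λ₂' = √(1−λ₂²), the integral over the circle ∫₀¹ ln|λ₁(λ₂ cos(2πθ) + i λ₂')| dθ equals ln(λ₁(1+λ₂')/2). -/
open Real MeasureTheory intervalIntegral Filter Topology

/-! Auxiliary lemmas for the circle-average of `log`. -/

private lemma neg_log_le_rpow {x : ℝ} (hx : 0 < x) :
    -Real.log x ≤ 2 * x ^ (-(1/2) : ℝ) := by
  have hs : (0:ℝ) < Real.sqrt x := Real.sqrt_pos.mpr hx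
  have h1 : Real.log x = 2 * Real.log (Real.sqrt x) := by
    rw [Real.log_sqrt hx.le]; ring
  have h2 : -Real.log (Real.sqrt x) ≤ (Real.sqrt x)⁻¹ := by
    rw [← Real.log_inv]
    have := Real.log_le_sub_one_of_pos (inv_pos.mpr hs)
    linarith [inv_pos.mpr hs]
  have h3 : x ^ (-(1/2) : ℝ) = (Real.sqrt x)⁻¹ := by
    rw [Real.rpow_neg hx.le, Real.sqrt_eq_rpow]
  rw [h3]
  linarith

/-- The set where `cos (2πθ) = 0` is countable, hence null. -/
private lemma ae_cos_ne : ∀ᵐ θ : ℝ, Real.cos (2 * π * θ) ≠ 0 := by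
  rw [ae_iff]
  have hsub : {θ : ℝ | ¬ Real.cos (2 * π * θ) ≠ 0}
      ⊆ Set.range (fun k : ℤ ↦ ((2*(k:ℝ)+1)/4 : ℝ)) := by
    intro θ hθ
    simp only [Set.mem_setOf_eq, not_not] at hθ
    rw [Real.cos_eq_zero_iff] at hθ
    obtain ⟨k, hk⟩ := hθ
    refine ⟨k, ?_⟩
    have hπ : (0:ℝ) < π := Real.pi_pos
    have e : (2*(k:ℝ)+1)/4 * (2*π) = (2*(k:ℝ)+1) * π / 2 := by ring
    have h2 : θ * (2*π) = (2*(k:ℝ)+1) * π / 2 := by rw [← hk]; ring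
    exact mul_right_cancel₀ (show (2*π) ≠ 0 by positivity) (e.trans h2.symm)
  exact measure_mono_null hsub ((Set.countable_range _).measure_zero _)

/-- Integrability of `log |cos (2πθ)|` on `[z, b]` for `z` a zero of `cos (2π·)`
and `b ≤ z + 1/4`. -/
private lemma logcos_intInt_right {z b : ℝ} (hz : Real.cos (2*π*z) = 0)
    (hzb : z ≤ b) (hb : b ≤ z + 1/4) :
    IntervalIntegrable (fun θ : ℝ ↦ Real.log |Real.cos (2*π*θ)|) volume z b := by
  have hg : IntervalIntegrable (fun θ : ℝ ↦ 2 * (θ - z) ^ (-(1/2) : ℝ)) volume z b := by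
    have h0 : IntervalIntegrable (fun x : ℝ ↦ x ^ (-(1/2) : ℝ)) volume 0 (b - z) :=
      intervalIntegrable_rpow' (by norm_num)
    have h1 := (h0.comp_sub_right z).const_mul 2
    simpa using h1
  apply hg.mono_fun'
  · apply Measurable.aestronglyMeasurable
    exact Real.measurable_log.comp
      (continuous_abs.comp (Real.continuous_cos.comp (by continuity))).measurable
  · rw [Set.uIoc_of_le hzb]
    refine (ae_restrict_iff' measurableSet_Ioc).mpr (Eventually.of_forall fun θ hθ => ?_)
    obtain ⟨h1, h2⟩ := hθ
    have hu : 0 < θ - z := by linarith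
    have hu4 : θ - z ≤ 1/4 := by linarith
    have hπ : (0:ℝ) < π := Real.pi_pos
    -- |cos 2πθ| = |sin (2π(θ-z))|
    have hsz : |Real.sin (2*π*z)| = 1 := by
      have h := Real.sin_sq_add_cos_sq (2*π*z)
      rw [hz] at h
      nlinarith [abs_nonneg (Real.sin (2*π*z)), sq_abs (Real.sin (2*π*z))]
    have hcos : |Real.cos (2*π*θ)| = |Real.sin (2*π*(θ - z))| := by
      have e : (2*π*θ) = 2*π*(θ-z) + 2*π*z := by ring
      rw [e, Real.cos_add, hz, mul_zero, zero_sub, abs_neg, abs_mul, hsz, mul_one]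
    have hjord : 4 * (θ - z) ≤ |Real.sin (2*π*(θ-z))| := by
      have habs : |2*π*(θ-z)| ≤ π/2 := by
        rw [abs_of_pos (by positivity)]
        nlinarith
      have h := Real.mul_abs_le_abs_sin habs
      rw [abs_of_pos (show (0:ℝ) < 2*π*(θ-z) by positivity)] at h
      have e : 2/π * (2*π*(θ-z)) = 4*(θ-z) := by field_simp; ring
      linarith [e ▸ h]
    have hsin1 : |Real.sin (2*π*(θ-z))| ≤ 1 :=
      abs_le.mpr ⟨Real.neg_one_le_sin _, Real.sin_le_one _⟩
    have hlog_np : Real.log |Real.cos (2*π*θ)| ≤ 0 :=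
      Real.log_nonpos (abs_nonneg _) (by rw [hcos]; exact hsin1)
    have hnorm : ‖Real.log |Real.cos (2*π*θ)|‖ = -Real.log |Real.cos (2*π*θ)| := by
      rw [Real.norm_eq_abs, abs_of_nonpos hlog_np]
    show ‖Real.log |Real.cos (2*π*θ)|‖ ≤ 2 * (θ - z) ^ (-(1/2) : ℝ)
    rw [hnorm, hcos]
    have h4u : (0:ℝ) < 4*(θ-z) := by linarith
    have l1 : Real.log (4*(θ-z)) ≤ Real.log |Real.sin (2*π*(θ-z))| :=
      Real.log_le_log h4u hjord
    have l2 : Real.log (θ-z) ≤ Real.log (4*(θ-z)) :=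
      Real.log_le_log hu (by linarith)
    have l3 := neg_log_le_rpow hu
    linarith

/-- `log |cos (2πθ)|` is interval integrable on `[0, 1]`. -/
private lemma logcos_intInt : IntervalIntegrable
    (fun θ : ℝ ↦ Real.log |Real.cos (2*π*θ)|) volume 0 1 := by
  have hπ : (0:ℝ) < π := Real.pi_pos
  have hz1 : Real.cos (2*π*(1/4 : ℝ)) = 0 := by
    have : 2*π*(1/4 : ℝ) = π/2 := by ring
    rw [this, Real.cos_pi_div_two]
  have hz2 : Real.cos (2*π*(-(1/4) : ℝ)) = 0 := by
    have : 2*π*(-(1/4) : ℝ) = -(π/2) := by ring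
    rw [this, Real.cos_neg, Real.cos_pi_div_two]
  have hz3 : Real.cos (2*π*(3/4 : ℝ)) = 0 := by
    have : 2*π*(3/4 : ℝ) = π + π/2 := by ring
    rw [this, Real.cos_add, Real.cos_pi_div_two, Real.cos_pi, Real.sin_pi]
    ring
  have hz4 : Real.cos (2*π*(-(3/4) : ℝ)) = 0 := by
    have : 2*π*(-(3/4) : ℝ) = -(π + π/2) := by ring
    rw [this, Real.cos_neg, Real.cos_add, Real.cos_pi_div_two, Real.cos_pi, Real.sin_pi]
    ring
  have flip : ∀ a b : ℝ,
      IntervalIntegrable (fun θ : ℝ ↦ Real.log |Real.cos (2*π*θ)|) volume a b →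
      IntervalIntegrable (fun θ : ℝ ↦ Real.log |Real.cos (2*π*θ)|) volume (-a) (-b) := by
    intro a b h
    have h2 := (IntervalIntegrable.iff_comp_neg (f := fun θ : ℝ ↦ Real.log |Real.cos (2*π*θ)|)).mp h
    have e : (fun x : ℝ ↦ Real.log |Real.cos (2*π*(-x))|)
        = fun θ : ℝ ↦ Real.log |Real.cos (2*π*θ)| := by
      funext x
      rw [show 2*π*(-x) = -(2*π*x) by ring, Real.cos_neg]
    rwa [e] at h2
  have h2 : IntervalIntegrable (fun θ : ℝ ↦ Real.log |Real.cos (2*π*θ)|) volume (1/4) (1/2) :=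
    logcos_intInt_right hz1 (by norm_num) (by norm_num)
  have h4 : IntervalIntegrable (fun θ : ℝ ↦ Real.log |Real.cos (2*π*θ)|) volume (3/4) 1 :=
    logcos_intInt_right hz3 (by norm_num) (by norm_num)
  have h1 : IntervalIntegrable (fun θ : ℝ ↦ Real.log |Real.cos (2*π*θ)|) volume 0 (1/4) := by
    have := flip _ _ (logcos_intInt_right hz2 (by norm_num : -(1/4:ℝ) ≤ 0) (by norm_num))
    simpa using this.symm
  have h3 : IntervalIntegrable (fun θ : ℝ ↦ Real.log |Real.cos (2*π*θ)|) volume (1/2) (3/4) := by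
    have := flip _ _ (logcos_intInt_right hz4 (by norm_num : -(3/4:ℝ) ≤ -(1/2)) (by norm_num))
    simpa using this.symm
  exact ((h1.trans h2).trans h3).trans h4

/-- Core series computation: the circle average of `log |1 + c e^{2πikθ}|` vanishes
for `|c| < 1` and `k ≠ 0`. -/
private lemma integral_log_abs_one_add (c : ℝ) (hc : |c| < 1) (k : ℤ) (hk : k ≠ 0) :
    ∫ θ in (0:ℝ)..1,
      Real.log (‖1 + (c:ℂ) * Complex.exp (((2*π*(k:ℝ)*θ : ℝ) : ℂ) * Complex.I)‖)
      = 0 := by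
  set F : ℕ → ℝ → ℝ :=
    fun n θ ↦ (-1:ℝ)^(n+1) * c^n / n * Real.cos ((n:ℝ) * (2*π*(k:ℝ)*θ)) with hFdef
  have hnorm : ∀ θ : ℝ,
      ‖(c:ℂ) * Complex.exp (((2*π*(k:ℝ)*θ : ℝ) : ℂ) * Complex.I)‖ < 1 := by
    intro θ
    rw [norm_mul, Complex.norm_exp_ofReal_mul_I, mul_one, Complex.norm_real]
    simpa using hc
  have hsum : ∀ θ : ℝ, HasSum (fun n ↦ F n θ)
      (Real.log (‖1 + (c:ℂ) *
        Complex.exp (((2*π*(k:ℝ)*θ : ℝ) : ℂ) * Complex.I)‖)) := by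
    intro θ
    have h := Complex.hasSum_taylorSeries_log (hnorm θ)
    have h2 := Complex.reCLM.hasSum h
    simp only [Complex.reCLM_apply] at h2
    have hterm : ∀ n : ℕ,
        ((-1:ℂ)^(n+1) * ((c:ℂ) * Complex.exp (((2*π*(k:ℝ)*θ : ℝ) : ℂ) * Complex.I))^n
          / (n:ℂ)).re = F n θ := by
      intro n
      have e1 : (-1:ℂ)^(n+1) * ((c:ℂ) * Complex.exp (((2*π*(k:ℝ)*θ : ℝ) : ℂ) * Complex.I))^n
            / (n:ℂ)
          = ((((-1:ℝ)^(n+1) * c^n / n : ℝ)) : ℂ) *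
            Complex.exp ((((n:ℝ) * (2*π*(k:ℝ)*θ) : ℝ) : ℂ) * Complex.I) := by
        rw [mul_pow, ← Complex.exp_nat_mul]
        push_cast
        ring
      rw [e1, Complex.re_ofReal_mul, Complex.exp_ofReal_mul_I_re]
    have e2 : (fun n : ℕ ↦
        ((-1:ℂ)^(n+1) * ((c:ℂ) * Complex.exp (((2*π*(k:ℝ)*θ : ℝ) : ℂ) * Complex.I))^n
          / (n:ℂ)).re) = fun n ↦ F n θ := funext hterm
    rw [e2] at h2
    rwa [Complex.log_re] at h2
  rw [integral_of_le (zero_le_one)]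
  have hFcont : ∀ n : ℕ, Continuous (F n) := by
    intro n
    apply Continuous.mul continuous_const
    exact Real.continuous_cos.comp (by continuity)
  have hFint : ∀ n : ℕ, Integrable (F n) (volume.restrict (Set.Ioc (0:ℝ) 1)) := by
    intro n
    exact ((hFcont n).integrableOn_Ioc (a := 0) (b := 1))
  have hFbound : ∀ n θ, ‖F n θ‖ ≤ |c|^n := by
    intro n θ
    rcases Nat.eq_zero_or_pos n with h | h
    · subst h; simp [hFdef]
    · have hn1 : (1:ℝ) ≤ (n:ℝ) := by exact_mod_cast h
      have : ‖F n θ‖ = |(-1:ℝ)^(n+1) * c^n / n| * |Real.cos ((n:ℝ) * (2*π*(k:ℝ)*θ))| := by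
        simp only [hFdef, Real.norm_eq_abs, abs_mul]
      rw [this]
      have hc1 : |Real.cos ((n:ℝ) * (2*π*(k:ℝ)*θ))| ≤ 1 :=
        Real.abs_cos_le_one _
      have hr : |(-1:ℝ)^(n+1) * c^n / n| ≤ |c|^n := by
        rw [abs_div, abs_mul, abs_pow, abs_pow, abs_neg, abs_one, one_pow, one_mul,
          Nat.abs_cast]
        rw [div_le_iff₀ (by linarith)]
        nlinarith [pow_nonneg (abs_nonneg c) n]
      calc |(-1:ℝ)^(n+1) * c^n / n| * |Real.cos ((n:ℝ) * (2*π*(k:ℝ)*θ))|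
          ≤ |(-1:ℝ)^(n+1) * c^n / n| * 1 := by
            exact mul_le_mul_of_nonneg_left hc1 (abs_nonneg _)
        _ ≤ |c|^n := by rw [mul_one]; exact hr
  have hnormint : ∀ n : ℕ, ∫ θ, ‖F n θ‖ ∂(volume.restrict (Set.Ioc (0:ℝ) 1)) ≤ |c|^n := by
    intro n
    calc ∫ θ, ‖F n θ‖ ∂(volume.restrict (Set.Ioc (0:ℝ) 1))
        ≤ ∫ _θ, |c|^n ∂(volume.restrict (Set.Ioc (0:ℝ) 1)) := by
          apply integral_mono ((hFint n).norm) (integrable_const _)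
          exact fun θ ↦ hFbound n θ
      _ = |c|^n := by
          simp [Measure.restrict_apply, Real.volume_Ioc]
  have hsummable : Summable (fun n ↦ ∫ θ, ‖F n θ‖ ∂(volume.restrict (Set.Ioc (0:ℝ) 1))) := by
    apply Summable.of_nonneg_of_le
        (fun n ↦ integral_nonneg (fun θ ↦ norm_nonneg _)) hnormint
    exact summable_geometric_of_lt_one (abs_nonneg c) hc
  have hHasSum := MeasureTheory.hasSum_integral_of_summable_integral_norm hFint hsummable
  have hzero : ∀ n : ℕ, ∫ θ, F n θ ∂(volume.restrict (Set.Ioc (0:ℝ) 1)) = 0 := by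
    intro n
    rw [← integral_of_le (zero_le_one)]
    rcases Nat.eq_zero_or_pos n with h | h
    · subst h; simp [hFdef]
    · have hC : ((n:ℝ) * (2*π*(k:ℝ))) ≠ 0 := by
        have : (k:ℝ) ≠ 0 := Int.cast_ne_zero.mpr hk
        have hn : (n:ℝ) ≠ 0 := Nat.cast_ne_zero.mpr h.ne'
        positivity
      have e3 : ∀ θ : ℝ, F n θ
          = (-1:ℝ)^(n+1) * c^n / n * Real.cos (((n:ℝ) * (2*π*(k:ℝ))) * θ) := by
        intro θ; rw [hFdef]; ring_nf
      rw [integral_congr (fun θ _ ↦ e3 θ)]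
      rw [intervalIntegral.integral_const_mul, integral_comp_mul_left (fun x ↦ Real.cos x) hC]
      rw [integral_cos]
      have : Real.sin ((n:ℝ) * (2*π*(k:ℝ)) * 1) = 0 := by
        have e4 : (n:ℝ) * (2*π*(k:ℝ)) * 1 = ((2*k*n : ℤ) : ℝ) * π := by push_cast; ring
        rw [e4, Real.sin_int_mul_pi]
      rw [this]
      simp
  have hZ : HasSum (fun _ : ℕ ↦ (0:ℝ))
      (∫ θ, (∑' n, F n θ) ∂(volume.restrict (Set.Ioc (0:ℝ) 1))) := by
    have e5 : (fun n : ℕ ↦ ∫ θ, F n θ ∂(volume.restrict (Set.Ioc (0:ℝ) 1)))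
        = fun _ : ℕ ↦ (0:ℝ) := funext hzero
    rwa [e5] at hHasSum
  have hval : ∫ θ, (∑' n, F n θ) ∂(volume.restrict (Set.Ioc (0:ℝ) 1)) = 0 :=
    (hZ.unique hasSum_zero)
  have hcongr : ∫ θ in Set.Ioc (0:ℝ) 1,
      Real.log (‖1 + (c:ℂ) * Complex.exp (((2*π*(k:ℝ)*θ : ℝ) : ℂ) * Complex.I)‖)
      = ∫ θ in Set.Ioc (0:ℝ) 1, (∑' n, F n θ) := by
    apply MeasureTheory.integral_congr_ae
    apply Eventually.of_forall
    intro θ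
    exact ((hsum θ).tsum_eq).symm
  rw [hcongr, hval]

/-- The main computation for `b > 0`:
`∫₀¹ log √(cos²(2πθ) + b² sin²(2πθ)) dθ = log ((1+b)/2)`. -/
private lemma sqrt_integral {b : ℝ} (hb : 0 < b) (hb1 : b ≤ 1) :
    ∫ θ in (0:ℝ)..1,
        Real.log (Real.sqrt ((Real.cos (2*π*θ))^2 + b^2 * (Real.sin (2*π*θ))^2))
      = Real.log ((1+b)/2) := by
  set c : ℝ := (1-b)/(1+b) with hcdef
  have hb1' : (0:ℝ) < 1 + b := by linarith
  have hc0 : 0 ≤ c := div_nonneg (by linarith) hb1'.le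
  have hc1 : c < 1 := by rw [hcdef, div_lt_one hb1']; linarith
  have habs_ne : ∀ θ : ℝ,
      ‖1 + (c:ℂ) * Complex.exp (((2*π*((-2:ℤ):ℝ)*θ : ℝ) : ℂ) * Complex.I)‖ ≠ 0 := by
    intro θ
    have h1 : ‖(c:ℂ) * Complex.exp (((2*π*((-2:ℤ):ℝ)*θ : ℝ) : ℂ) * Complex.I)‖ = c := by
      rw [norm_mul, Complex.norm_exp_ofReal_mul_I, mul_one, Complex.norm_real,
        Real.norm_eq_abs, abs_of_nonneg hc0]
    have h2 : (1:ℝ) - c ≤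
        ‖(1:ℂ) + (c:ℂ) * Complex.exp (((2*π*((-2:ℤ):ℝ)*θ : ℝ) : ℂ) * Complex.I)‖ := by
      have h3 := norm_sub_norm_le (1:ℂ)
        (-((c:ℂ) * Complex.exp (((2*π*((-2:ℤ):ℝ)*θ : ℝ) : ℂ) * Complex.I)))
      rw [norm_neg, sub_neg_eq_add, norm_one, h1] at h3
      exact h3
    have : (0:ℝ) < 1 - c := by linarith
    intro hcontra
    rw [hcontra] at h2
    linarith
  have hpt : ∀ θ : ℝ,
      Real.sqrt ((Real.cos (2*π*θ))^2 + b^2 * (Real.sin (2*π*θ))^2)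
        = ((1+b)/2) *
          ‖1 + (c:ℂ) * Complex.exp (((2*π*((-2:ℤ):ℝ)*θ : ℝ) : ℂ) * Complex.I)‖ := by
    intro θ
    set t : ℝ := 2*π*((-2:ℤ):ℝ)*θ with htdef
    have habs : ‖1 + (c:ℂ) * Complex.exp (((t : ℝ) : ℂ) * Complex.I)‖
        = Real.sqrt ((1 + c * Real.cos t)^2 + (c * Real.sin t)^2) := by
      have e : (1:ℂ) + (c:ℂ) * Complex.exp (((t : ℝ) : ℂ) * Complex.I)
          = ((1 + c * Real.cos t : ℝ) : ℂ) + ((c * Real.sin t : ℝ) : ℂ) * Complex.I := by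
        rw [Complex.exp_mul_I]
        push_cast [Complex.ofReal_cos, Complex.ofReal_sin]
        ring
      rw [e, Complex.norm_add_mul_I]
    rw [habs]
    rw [show ((1+b)/2) * Real.sqrt ((1 + c * Real.cos t)^2 + (c * Real.sin t)^2)
        = Real.sqrt (((1+b)/2)^2 * ((1 + c * Real.cos t)^2 + (c * Real.sin t)^2)) by
      rw [Real.sqrt_mul (sq_nonneg _), Real.sqrt_sq (by positivity)]]
    congr 1
    have ht2 : t = -(2*(2*π*θ)) := by rw [htdef]; push_cast; ring
    rw [ht2, Real.cos_neg, Real.sin_neg, Real.cos_two_mul]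
    have hsin2 : Real.sin (2*(2*π*θ))^2 = 1 - Real.cos (2*(2*π*θ))^2 := Real.sin_sq _
    have hsinθ : Real.sin (2*π*θ)^2 = 1 - Real.cos (2*π*θ)^2 := Real.sin_sq _
    rw [Real.cos_two_mul] at hsin2
    have hbne : (1+b) ≠ 0 := hb1'.ne'
    rw [hcdef]
    generalize Real.sin (2*(2*π*θ)) = s at hsin2 ⊢
    field_simp
    linear_combination 4*b^2 * hsinθ - (1-b)^2 * hsin2
  have hcont2 : Continuous (fun θ : ℝ ↦
      Real.log (‖1 + (c:ℂ) *
        Complex.exp (((2*π*((-2:ℤ):ℝ)*θ : ℝ) : ℂ) * Complex.I)‖)) := by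
    apply Continuous.log
    · apply continuous_norm.comp
      apply Continuous.add continuous_const
      apply Continuous.mul continuous_const
      apply Complex.continuous_exp.comp
      apply Continuous.mul _ continuous_const
      exact Complex.continuous_ofReal.comp (by continuity)
    · exact habs_ne
  have heq : Set.EqOn
      (fun θ : ℝ ↦ Real.log (Real.sqrt ((Real.cos (2*π*θ))^2 + b^2 * (Real.sin (2*π*θ))^2)))
      (fun θ : ℝ ↦ Real.log ((1+b)/2) + Real.log (‖1 + (c:ℂ) *
        Complex.exp (((2*π*((-2:ℤ):ℝ)*θ : ℝ) : ℂ) * Complex.I)‖))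
      (Set.uIcc (0:ℝ) 1) := by
    intro θ _
    simp only
    rw [hpt θ, Real.log_mul (by positivity) (habs_ne θ)]
  rw [integral_congr heq,
    integral_add intervalIntegrable_const (hcont2.intervalIntegrable 0 1),
    integral_log_abs_one_add c (by rwa [abs_of_nonneg hc0]) (-2) (by norm_num),
    intervalIntegral.integral_const]
  simp

/-- The degenerate case `b = 0`: `∫₀¹ log |cos 2πθ| dθ = log (1/2)`. -/
private lemma logcos_integral :
    ∫ θ in (0:ℝ)..1, Real.log |Real.cos (2*π*θ)| = Real.log (1/2) := by
  set F : ℕ → ℝ → ℝ := fun n θ ↦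
    Real.log (Real.sqrt ((Real.cos (2*π*θ))^2 + (1/((n:ℝ)+1))^2 * (Real.sin (2*π*θ))^2))
    with hFdef
  have hbpos : ∀ n : ℕ, (0:ℝ) < 1/((n:ℝ)+1) := by
    intro n; positivity
  have hble : ∀ n : ℕ, (1:ℝ)/((n:ℝ)+1) ≤ 1 := by
    intro n
    rw [div_le_one (by positivity)]
    linarith [Nat.cast_nonneg (α := ℝ) n]
  have key : Tendsto (fun n : ℕ ↦ ∫ θ in (0:ℝ)..1, F n θ) atTop
      (𝓝 (∫ θ in (0:ℝ)..1, Real.log |Real.cos (2*π*θ)|)) := by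
    apply intervalIntegral.tendsto_integral_filter_of_dominated_convergence
      (bound := fun θ ↦ -Real.log |Real.cos (2*π*θ)|)
    · apply Eventually.of_forall
      intro n
      apply Continuous.aestronglyMeasurable
      apply Continuous.log
      · apply Real.continuous_sqrt.comp
        continuity
      · intro θ
        have h1 : (0:ℝ) < (Real.cos (2*π*θ))^2 + (1/((n:ℝ)+1))^2 * (Real.sin (2*π*θ))^2 := by
          have hs := Real.sin_sq_add_cos_sq (2*π*θ)
          have hq : (0:ℝ) < (1/((n:ℝ)+1))^2 := by positivity
          have hq1 : (1/((n:ℝ)+1))^2 ≤ 1 := by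
            have h1 := hbpos n
            have h2 := hble n
            nlinarith
          have hA : (0:ℝ) ≤ (1 - (1/((n:ℝ)+1))^2) * (Real.cos (2*π*θ))^2 :=
            mul_nonneg (by linarith) (sq_nonneg _)
          nlinarith [hA, hs, hq]
        exact (Real.sqrt_pos.mpr h1).ne'
    · apply Eventually.of_forall
      intro n
      filter_upwards [ae_cos_ne] with θ hθ _
      have hs := Real.sin_sq_add_cos_sq (2*π*θ)
      set X := (Real.cos (2*π*θ))^2 + (1/((n:ℝ)+1))^2 * (Real.sin (2*π*θ))^2 with hX
      have hqsin : (0:ℝ) ≤ (1/((n:ℝ)+1))^2 * (Real.sin (2*π*θ))^2 :=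
        mul_nonneg (sq_nonneg _) (sq_nonneg _)
      have hXpos : 0 < X := by
        have hcpos : (0:ℝ) < (Real.cos (2*π*θ))^2 := by positivity
        rw [hX]
        linarith
      have hX1 : X ≤ 1 := by
        have h2 : (1/((n:ℝ)+1))^2 ≤ 1 := by
          have h1 := hbpos n
          have h2 := hble n
          nlinarith
        have hA : (0:ℝ) ≤ (1 - (1/((n:ℝ)+1))^2) * (Real.sin (2*π*θ))^2 :=
          mul_nonneg (by linarith) (sq_nonneg _)
        rw [hX]
        nlinarith [hA, hs]
      have hcosle : |Real.cos (2*π*θ)| ≤ Real.sqrt X := by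
        rw [← Real.sqrt_sq_eq_abs]
        apply Real.sqrt_le_sqrt
        rw [hX]
        linarith
      have hsqrt1 : Real.sqrt X ≤ 1 := by
        rw [show (1:ℝ) = Real.sqrt 1 by simp]
        exact Real.sqrt_le_sqrt hX1
      have hFle : F n θ ≤ 0 := Real.log_nonpos (Real.sqrt_nonneg _) hsqrt1
      have hFge : Real.log |Real.cos (2*π*θ)| ≤ F n θ :=
        Real.log_le_log (abs_pos.mpr hθ) hcosle
      rw [Real.norm_eq_abs, abs_of_nonpos hFle]
      linarith
    · exact logcos_intInt.neg
    · filter_upwards [ae_cos_ne] with θ hθ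
      intro _
      have h0 : Tendsto (fun n : ℕ ↦ 1/((n:ℝ)+1)) atTop (𝓝 0) :=
        tendsto_one_div_add_atTop_nhds_zero_nat
      have h1 : Tendsto (fun n : ℕ ↦ (1/((n:ℝ)+1))^2 * (Real.sin (2*π*θ))^2) atTop (𝓝 0) := by
        have := (h0.pow 2).mul_const ((Real.sin (2*π*θ))^2)
        simpa using this
      have h2 : Tendsto (fun n : ℕ ↦
          (Real.cos (2*π*θ))^2 + (1/((n:ℝ)+1))^2 * (Real.sin (2*π*θ))^2) atTop
          (𝓝 ((Real.cos (2*π*θ))^2)) := by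
        simpa using (tendsto_const_nhds (x := (Real.cos (2*π*θ))^2)).add h1
      have h3 := (Real.continuous_sqrt.tendsto _).comp h2
      rw [Real.sqrt_sq_eq_abs] at h3
      have h5 := (Real.continuousAt_log (abs_ne_zero.mpr hθ)).tendsto.comp h3
      simpa [hFdef, Function.comp_def] using h5
  have hvals : (fun n : ℕ ↦ ∫ θ in (0:ℝ)..1, F n θ)
      = fun n : ℕ ↦ Real.log ((1 + 1/((n:ℝ)+1))/2) := by
    funext n
    exact sqrt_integral (hbpos n) (hble n)
  rw [hvals] at key
  have key2 : Tendsto (fun n : ℕ ↦ Real.log ((1 + 1/((n:ℝ)+1))/2)) atTop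
      (𝓝 (Real.log (1/2))) := by
    have h0 : Tendsto (fun n : ℕ ↦ 1/((n:ℝ)+1)) atTop (𝓝 0) :=
      tendsto_one_div_add_atTop_nhds_zero_nat
    have h1 : Tendsto (fun n : ℕ ↦ (1 + 1/((n:ℝ)+1))/2) atTop (𝓝 ((1:ℝ)/2)) := by
      have := ((tendsto_const_nhds (x := (1:ℝ)) (f := atTop (α := ℕ))).add h0).div_const 2
      simpa using this
    have := (Real.continuousAt_log (by norm_num)).tendsto.comp h1
    simpa [Function.comp_def] using this
  exact tendsto_nhds_unique key key2

set_option maxHeartbeats 1000000 in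
open Real in
/-- `∫₀¹ ln|lam1(lam2 cos(2πθ) + i lam2')| dθ = ln(lam1(1+lam2')/2)`. -/
theorem log_integral_rho (lam1 lam2 : ℝ) (h₁ : 0 < lam1) (h₁' : lam1 ≤ 1)
    (h₂ : 0 ≤ lam2) (h₂' : lam2 ≤ 1) :
    ∫ θ in (0:ℝ)..1,
        Real.log (‖(lam1 : ℂ) *
          (((lam2 * Real.cos (2 * π * θ) : ℝ) : ℂ) +
            Complex.I * ((Real.sqrt (1 - lam2 ^ 2) : ℝ) : ℂ))‖)
      = Real.log (lam1 * (1 + Real.sqrt (1 - lam2 ^ 2)) / 2) := by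
  set b : ℝ := Real.sqrt (1 - lam2 ^ 2) with hbdef
  have h1sq : (0:ℝ) ≤ 1 - lam2^2 := by nlinarith
  have hsq : b^2 = 1 - lam2^2 := Real.sq_sqrt h1sq
  have hb0 : 0 ≤ b := Real.sqrt_nonneg _
  have hb1 : b ≤ 1 := by
    rw [hbdef]
    exact Real.sqrt_le_one.mpr (by nlinarith)
  have habs : ∀ θ : ℝ, ‖(lam1 : ℂ) *
      (((lam2 * Real.cos (2 * π * θ) : ℝ) : ℂ) + Complex.I * ((b : ℝ) : ℂ))‖
      = lam1 * Real.sqrt ((Real.cos (2*π*θ))^2 + b^2 * (Real.sin (2*π*θ))^2) := by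
    intro θ
    rw [norm_mul, Complex.norm_real, Real.norm_eq_abs, abs_of_pos h₁]
    congr 1
    have e : ((lam2 * Real.cos (2*π*θ) : ℝ) : ℂ) + Complex.I * ((b:ℝ):ℂ)
        = ((lam2 * Real.cos (2*π*θ) : ℝ) : ℂ) + ((b : ℝ) : ℂ) * Complex.I := by ring
    rw [e, Complex.norm_add_mul_I]
    congr 1
    have hs := Real.sin_sq_add_cos_sq (2*π*θ)
    linear_combination (1 - Real.sin (2*π*θ)^2) * hsq + (lam2^2 - 1) * hs
  rcases eq_or_lt_of_le hb0 with hb | hb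
  · -- degenerate case b = 0
    have hcoseq : ∀ θ : ℝ, Real.sqrt ((Real.cos (2*π*θ))^2 + b^2*(Real.sin (2*π*θ))^2)
        = |Real.cos (2*π*θ)| := by
      intro θ
      rw [← hb]
      norm_num [Real.sqrt_sq_eq_abs]
    have hcongr : ∀ᵐ θ : ℝ, θ ∈ Set.uIoc (0:ℝ) 1 →
        Real.log (‖(lam1 : ℂ) *
          (((lam2 * Real.cos (2 * π * θ) : ℝ) : ℂ) + Complex.I * ((b : ℝ) : ℂ))‖)
        = Real.log lam1 + Real.log |Real.cos (2*π*θ)| := by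
      filter_upwards [ae_cos_ne] with θ hθ _
      rw [habs θ, hcoseq θ, Real.log_mul h₁.ne' (abs_ne_zero.mpr hθ)]
    rw [intervalIntegral.integral_congr_ae hcongr,
      integral_add intervalIntegrable_const logcos_intInt,
      intervalIntegral.integral_const, logcos_integral, ← hb]
    rw [show lam1 * (1+0)/2 = lam1 * (1/2) by ring,
      Real.log_mul h₁.ne' (by norm_num : (1/2:ℝ) ≠ 0)]
    norm_num
  · -- main case 0 < b
    have hXpos : ∀ θ : ℝ,
        (0:ℝ) < Real.sqrt ((Real.cos (2*π*θ))^2 + b^2*(Real.sin (2*π*θ))^2) := by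
      intro θ
      apply Real.sqrt_pos.mpr
      have hs := Real.sin_sq_add_cos_sq (2*π*θ)
      have hs2 : b^2*(Real.sin (2*π*θ))^2 = b^2 - b^2*(Real.cos (2*π*θ))^2 := by
        linear_combination b^2 * hs
      have hA : (0:ℝ) ≤ (1 - b^2) * (Real.cos (2*π*θ))^2 :=
        mul_nonneg (by nlinarith) (sq_nonneg _)
      have hb2 : (0:ℝ) < b^2 := by positivity
      nlinarith [hA, hs2, hb2]
    have hcongr : Set.EqOn
        (fun θ : ℝ ↦ Real.log (‖(lam1 : ℂ) *
          (((lam2 * Real.cos (2 * π * θ) : ℝ) : ℂ) + Complex.I * ((b : ℝ) : ℂ))‖))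
        (fun θ : ℝ ↦ Real.log lam1 +
          Real.log (Real.sqrt ((Real.cos (2*π*θ))^2 + b^2 * (Real.sin (2*π*θ))^2)))
        (Set.uIcc (0:ℝ) 1) := by
      intro θ _
      simp only
      rw [habs θ, Real.log_mul h₁.ne' (hXpos θ).ne']
    have hcont : Continuous (fun θ : ℝ ↦
        Real.log (Real.sqrt ((Real.cos (2*π*θ))^2 + b^2 * (Real.sin (2*π*θ))^2))) := by
      apply Continuous.log
      · apply Real.continuous_sqrt.comp
        continuity
      · exact fun θ ↦ (hXpos θ).ne'
    rw [integral_congr hcongr,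
      integral_add intervalIntegrable_const (hcont.intervalIntegrable 0 1),
      intervalIntegral.integral_const, sqrt_integral hb hb1]
    rw [show lam1 * (1+b)/2 = lam1 * ((1+b)/2) by ring,
      Real.log_mul h₁.ne' (show ((1+b)/2 : ℝ) ≠ 0 by positivity)]
    norm_num
end

section
/- Let ω be irrational with convergents p_n/q_n and fix ε > 0 with q_{n+1} ≥ e^{ε q_n}. Let x, x' be integers with 0 < |x − x'| < 2 q_n, and let t be an integer with 0 ≤ t q_n ≤ 10 q_{n+1}^{1−ε}. Then for n sufficiently large, ‖(x − x')/2 · ω − t q_n ω‖ ≥ 1/(3 q_n), assuming x − x' is even. -/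
/-- The `n`-th continued fraction denominator `q_n` of `ω`. -/
noncomputable def cfDen (ω : ℝ) (n : ℕ) : ℝ := (GenContFract.of ω).dens n

/-- Distance from a real number to the nearest integer. -/
noncomputable def distZ (x : ℝ) : ℝ := ‖(x : UnitAddCircle)‖

namespace SmallDivisorAux

open GenContFract

lemma notTerm {ω : ℝ} (hω : Irrational ω) (n : ℕ) :
    ¬(GenContFract.of ω).TerminatedAt n := by
  intro h
  obtain ⟨q, hq⟩ := exists_rat_eq_of_terminates (v := ω) ⟨n, h⟩
  exact hω ⟨q, hq.symm⟩

lemma contsAuxInt {ω : ℝ} (hω : Irrational ω) :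
    ∀ n, (∃ a : ℤ, ((GenContFract.of ω).contsAux n).a = (a : ℝ)) ∧
      ∃ b : ℤ, ((GenContFract.of ω).contsAux n).b = (b : ℝ) := by
  have step : ∀ n, ((∃ a : ℤ, ((GenContFract.of ω).contsAux n).a = (a : ℝ)) ∧
        ∃ b : ℤ, ((GenContFract.of ω).contsAux n).b = (b : ℝ)) ∧
      ((∃ a : ℤ, ((GenContFract.of ω).contsAux (n+1)).a = (a : ℝ)) ∧
        ∃ b : ℤ, ((GenContFract.of ω).contsAux (n+1)).b = (b : ℝ)) := by
    intro n
    induction n with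
    | zero =>
      constructor
      · rw [zeroth_contAux_eq_one_zero]
        exact ⟨⟨1, by norm_num⟩, ⟨0, by norm_num⟩⟩
      · rw [first_contAux_eq_h_one, of_h_eq_floor]
        exact ⟨⟨⌊ω⌋, rfl⟩, ⟨1, by norm_num⟩⟩
    | succ n ih =>
      refine ⟨ih.2, ?_⟩
      obtain ⟨gp, hgp⟩ : ∃ gp, (GenContFract.of ω).s.get? n = some gp :=
        Option.ne_none_iff_exists'.1 (notTerm hω n)
      obtain ⟨ha1, z, hz⟩ := of_partNum_eq_one_and_exists_int_partDen_eq hgp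
      rw [contsAux_recurrence hgp rfl rfl]
      obtain ⟨⟨a0, ha0⟩, b0, hb0⟩ := ih.1
      obtain ⟨⟨a1, ha1'⟩, b1, hb1⟩ := ih.2
      exact ⟨⟨z * a1 + a0, by simp [hz, ha0, ha1', ha1]⟩,
             ⟨z * b1 + b0, by simp [hz, hb0, hb1, ha1]⟩⟩
  exact fun n => (step n).1

lemma numInt {ω : ℝ} (hω : Irrational ω) (n : ℕ) :
    ∃ a : ℤ, (GenContFract.of ω).nums n = (a : ℝ) := by
  rw [num_eq_conts_a, nth_cont_eq_succ_nth_contAux]; exact (contsAuxInt hω (n+1)).1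

lemma denInt {ω : ℝ} (hω : Irrational ω) (n : ℕ) :
    ∃ b : ℤ, (GenContFract.of ω).dens n = (b : ℝ) := by
  rw [den_eq_conts_b, nth_cont_eq_succ_nth_contAux]; exact (contsAuxInt hω (n+1)).2

lemma sq_div_four_le_exp {x : ℝ} (hx : 0 ≤ x) : x^2/4 ≤ Real.exp x := by
  have h := Real.add_one_le_exp (x/2)
  have e : Real.exp x = Real.exp (x/2) * Real.exp (x/2) := by
    rw [← Real.exp_add]; ring_nf
  nlinarith [Real.exp_pos (x/2)]

lemma distZ_le (y : ℝ) (m : ℤ) : distZ y ≤ |y - m| := by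
  rw [distZ, UnitAddCircle.norm_eq]; exact round_le y m

lemma distZ_eq (y : ℝ) : distZ y = |y - round y| := UnitAddCircle.norm_eq

lemma distZ_sub_ge (a b : ℝ) : distZ a - distZ b ≤ distZ (a - b) := by
  unfold distZ
  have h : ((a - b : ℝ) : UnitAddCircle) = ((a : ℝ) : UnitAddCircle) - ((b : ℝ) : UnitAddCircle) :=
    rfl
  rw [h]
  exact norm_sub_norm_le _ _

end SmallDivisorAux

open SmallDivisorAux in
/-- For `n` large, in a strong Liouville scale, if `0 < |x − x'| < 2 q_n` with `x − x'`
even and `0 ≤ t q_n ≤ 10 q_{n+1}^{1−ε}`, then `‖(x−x')/2 · ω − t q_n ω‖ ≥ 1/(3 q_n)`. -/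
theorem small_divisor_lower_bound (ω : ℝ) (hω : Irrational ω) (ε : ℝ) (hε : 0 < ε) :
    ∃ N : ℕ, ∀ n ≥ N,
      Real.exp (ε * cfDen ω n) ≤ cfDen ω (n + 1) →
      ∀ x x' : ℤ, x ≠ x' → (|x - x'| : ℝ) < 2 * cfDen ω n → Even (x - x') →
      ∀ t : ℤ, 0 ≤ t → (t : ℝ) * cfDen ω n ≤ 10 * cfDen ω (n + 1) ^ (1 - ε) →
      distZ (((x : ℝ) - (x' : ℝ)) / 2 * ω - (t : ℝ) * cfDen ω n * ω)
        ≥ 1 / (3 * cfDen ω n) := by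
  refine ⟨max 5 (⌈120/ε^4 + 12/ε^2⌉₊ + 1), ?_⟩
  intro n hn hLiou x x' hne hlt heven t ht htq
  obtain ⟨P, hP⟩ := numInt hω n
  obtain ⟨Q, hQ⟩ := denInt hω n
  obtain ⟨P', hP'⟩ := numInt hω (n+1)
  obtain ⟨Q', hQ'⟩ := denInt hω (n+1)
  set q : ℝ := cfDen ω n with hq
  set q' : ℝ := cfDen ω (n+1) with hq'
  have hqQ : q = (Q : ℝ) := hQ
  have hq'Q : q' = (Q' : ℝ) := hQ'
  have h5 : 5 ≤ n := le_trans (le_max_left _ _) hn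
  have hCn : (⌈120/ε^4 + 12/ε^2⌉₊ + 1 : ℕ) ≤ n := le_trans (le_max_right _ _) hn
  -- q ≥ n + 1 and hence q is large
  have hfib : ((n : ℝ) + 1) ≤ q := by
    have h1 : ((Nat.fib (n+1) : ℝ)) ≤ q :=
      GenContFract.succ_nth_fib_le_of_nth_den (v := ω) (Or.inr (notTerm hω (n-1)))
    have h2 : (n+1) ≤ Nat.fib (n+1) := Nat.le_fib_self (by omega)
    calc ((n : ℝ) + 1) = ((n + 1 : ℕ) : ℝ) := by push_cast; ring
      _ ≤ (Nat.fib (n+1) : ℝ) := by exact_mod_cast h2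
      _ ≤ q := h1
  have hqC : 120/ε^4 + 12/ε^2 ≤ q := by
    have h1 : (120/ε^4 + 12/ε^2 : ℝ) ≤ (⌈120/ε^4 + 12/ε^2⌉₊ : ℝ) := Nat.le_ceil _
    have h2 : ((⌈120/ε^4 + 12/ε^2⌉₊ : ℕ) : ℝ) ≤ (n : ℝ) := by exact_mod_cast le_trans (by omega) hCn
    linarith
  have hq1 : (1 : ℝ) ≤ q := by
    have : (0 : ℝ) ≤ (n : ℝ) := Nat.cast_nonneg n
    linarith
  have hq0 : (0 : ℝ) < q := lt_of_lt_of_le one_pos hq1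
  have hqq' : q ≤ q' := GenContFract.of_den_mono
  have hq'0 : (0 : ℝ) < q' := lt_of_lt_of_le hq0 hqq'
  have hQ0 : (Q : ℝ) ≠ 0 := by rw [← hqQ]; exact ne_of_gt hq0
  -- thresholds
  have hq12 : (12 : ℝ) ≤ ε^2 * q := by
    have h1 : ε^2 * (120/ε^4 + 12/ε^2) = 120/ε^2 + 12 := by field_simp
    have h2 : ε^2 * (120/ε^4 + 12/ε^2) ≤ ε^2 * q :=
      mul_le_mul_of_nonneg_left hqC (sq_nonneg ε)
    have h3 : (0:ℝ) ≤ 120/ε^2 := by positivity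
    linarith
  have hq120 : (120 : ℝ) ≤ ε^4 * q := by
    have h1 : ε^4 * (120/ε^4 + 12/ε^2) = 120 + 12*ε^2 := by field_simp
    have h2 : ε^4 * (120/ε^4 + 12/ε^2) ≤ ε^4 * q := by
      apply mul_le_mul_of_nonneg_left hqC; positivity
    nlinarith [sq_nonneg ε]
  -- approximation bound
  have herr : |q * ω - (P : ℝ)| ≤ 1 / q' := by
    have happ := GenContFract.abs_sub_convs_le (v := ω) (notTerm hω n)
    rw [GenContFract.conv_eq_num_div_den, hP] at happ
    have h3 : q * ω - (P : ℝ) = q * (ω - (P : ℝ)/q) := by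
      field_simp
    rw [h3, abs_mul, abs_of_pos hq0]
    calc q * |ω - (P:ℝ)/q| ≤ q * (1/(q*q')) := by
          apply mul_le_mul_of_nonneg_left _ hq0.le
          have h4 : (P:ℝ) / q = (P:ℝ) / (GenContFract.of ω).dens n := by rw [hq]; rfl
          have h5 : q = (GenContFract.of ω).dens n := by rw [hq]; rfl
          rw [h4, h5]; exact happ
      _ = 1/q' := by
          rw [mul_one_div, ← div_div, div_self hq0.ne']
  -- determinant
  have hdet : P * Q' - Q * P' = (-1 : ℤ)^(n+1) := by
    have hdR := SimpContFract.determinant (s := SimpContFract.of ω) (n := n) (notTerm hω n)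
    have hdR' : (P : ℝ) * (Q' : ℝ) - (Q : ℝ) * (P' : ℝ) = (-1 : ℝ)^(n+1) := by
      rw [← hP, ← hQ, ← hP', ← hQ']; exact hdR
    exact_mod_cast hdR'
  -- the numerator k = (x - x')/2
  obtain ⟨r, hr⟩ := heven
  have hr0 : r ≠ 0 := by
    rintro rfl
    simp only [add_zero] at hr
    exact hne (by omega)
  have hkR : ((x : ℝ) - (x' : ℝ))/2 = (r : ℝ) := by
    have : ((x - x' : ℤ) : ℝ) = (r : ℝ) + (r : ℝ) := by rw [hr]; push_cast; ring
    push_cast at this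
    linarith
  have hkq : |(r : ℝ)| < q := by
    have h2 : |(x : ℝ) - (x' : ℝ)| = 2 * |(r : ℝ)| := by
      have h3 : (x : ℝ) - (x' : ℝ) = 2 * (r : ℝ) := by
        have hrR : ((x - x' : ℤ) : ℝ) = ((r + r : ℤ) : ℝ) := by rw [hr]
        push_cast at hrR
        linarith
      rw [h3, abs_mul]; norm_num
    rw [h2] at hlt
    linarith
  have hkQ : |r| < Q := by
    have : (|r| : ℝ) < (Q : ℝ) := by rw [← hqQ]; push_cast; exact hkq
    exact_mod_cast this
  -- lower bound on distZ (r ω)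
  set m : ℤ := round ((r : ℝ) * ω) with hm
  have hnz : r * P - m * Q ≠ 0 := by
    intro hzero
    have hD2 : ((-1 : ℤ)^(n+1))^2 = 1 := by
      rw [← pow_mul, mul_comm (n+1) 2, pow_mul]; norm_num
    have h2 : r * ((-1 : ℤ)^(n+1)) = Q * (m * Q' - r * P') := by
      linear_combination Q' * hzero - r * hdet
    have hQr : Q ∣ r := ⟨(m * Q' - r * P') * ((-1 : ℤ)^(n+1)), by
      linear_combination ((-1 : ℤ)^(n+1)) * h2 - r * hD2⟩
    have : Q ≤ |r| := Int.le_of_dvd (abs_pos.mpr hr0) ((dvd_abs Q r).mpr hQr)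
    omega
  have h1ab : (1 : ℝ) ≤ |(r : ℝ) * P - (m : ℝ) * Q| := by
    have := Int.one_le_abs hnz
    have h2 : (1 : ℝ) ≤ ((|r * P - m * Q| : ℤ) : ℝ) := by exact_mod_cast this
    rw [Int.cast_abs] at h2
    push_cast at h2
    exact h2
  have key1 : 1/q - 1/q' ≤ distZ ((r : ℝ) * ω) := by
    rw [distZ_eq, ← hm]
    have hid : (r : ℝ) * ω - (m : ℝ) =
        ((r : ℝ) * (q * ω - (P : ℝ)) + ((r : ℝ) * P - (m : ℝ) * Q)) / q := by
      rw [hqQ]; field_simp; ring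
    have hub : |(r : ℝ) * (q * ω - (P : ℝ))| ≤ q * (1/q') := by
      rw [abs_mul]
      exact mul_le_mul hkq.le herr (abs_nonneg _) hq0.le
    have habs : 1 - q * (1/q') ≤
        |(r : ℝ) * (q * ω - (P : ℝ)) + ((r : ℝ) * P - (m : ℝ) * Q)| := by
      have h3 := abs_sub_abs_le_abs_sub ((r : ℝ) * P - (m : ℝ) * Q)
        (-((r : ℝ) * (q * ω - (P : ℝ))))
      rw [abs_neg, sub_neg_eq_add] at h3
      have h4 : ((r : ℝ) * P - (m : ℝ) * Q) + (r : ℝ) * (q * ω - (P : ℝ)) =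
          (r : ℝ) * (q * ω - (P : ℝ)) + ((r : ℝ) * P - (m : ℝ) * Q) := by ring
      rw [h4] at h3
      linarith
    rw [hid, abs_div, abs_of_pos hq0]
    have hstep : (1 - q * (1/q'))/q ≤
        |(r : ℝ) * (q * ω - (P : ℝ)) + ((r : ℝ) * P - (m : ℝ) * Q)| / q := by gcongr
    have heq : (1 - q * (1/q'))/q = 1/q - 1/q' := by
      rw [mul_one_div, sub_div, div_div, mul_comm q' q, ← div_div, div_self hq0.ne']
    linarith
  -- upper bound on distZ (t q ω)
  have hq'eps0 : (0 : ℝ) < q' ^ ε := Real.rpow_pos_of_pos hq'0 ε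
  have key2 : distZ ((t : ℝ) * q * ω) ≤ 10 / q' ^ ε := by
    have h1 : distZ ((t : ℝ) * q * ω) ≤ |(t : ℝ) * q * ω - ((t * P : ℤ) : ℝ)| :=
      distZ_le _ _
    have h2 : |(t : ℝ) * q * ω - ((t * P : ℤ) : ℝ)| = (t : ℝ) * |q * ω - (P : ℝ)| := by
      push_cast
      rw [show (t : ℝ) * q * ω - (t : ℝ) * (P : ℝ) = (t : ℝ) * (q * ω - (P : ℝ)) by ring,
        abs_mul, abs_of_nonneg (by exact_mod_cast ht)]
    have ht0 : (0 : ℝ) ≤ (t : ℝ) := by exact_mod_cast ht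
    have h3 : (t : ℝ) ≤ 10 * q' ^ (1 - ε) := by
      calc (t : ℝ) = (t : ℝ) * 1 := by ring
        _ ≤ (t : ℝ) * q := by exact mul_le_mul_of_nonneg_left hq1 ht0
        _ ≤ 10 * q' ^ (1 - ε) := htq
    have h4 : q' ^ (1 - ε) = q' / q' ^ ε := by
      rw [Real.rpow_sub hq'0, Real.rpow_one]
    have h5 : (t : ℝ) * |q * ω - (P : ℝ)| ≤ (10 * q' ^ (1 - ε)) * (1 / q') := by
      apply mul_le_mul h3 herr (abs_nonneg _)
      positivity
    have h6 : (10 * q' ^ (1 - ε)) * (1 / q') = 10 / q' ^ ε := by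
      rw [h4]; field_simp
    calc distZ ((t : ℝ) * q * ω) ≤ (t : ℝ) * |q * ω - (P : ℝ)| := by rw [← h2]; exact h1
      _ ≤ 10 / q' ^ ε := by rw [← h6]; exact h5
  -- size bounds on q' and q'^ε
  have hεq : (0 : ℝ) ≤ ε * q := by positivity
  have hq'big : 3 * q ≤ q' := by
    have h1 := sq_div_four_le_exp hεq
    have h2 : 12 * q ≤ (ε^2 * q) * q := mul_le_mul_of_nonneg_right hq12 hq0.le
    have h3 : (ε*q)^2 = (ε^2 * q) * q := by ring
    rw [h3] at h1
    linarith
  have hq'epsbig : 30 * q ≤ q' ^ ε := by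
    have h1 : Real.exp (ε * q) ^ ε ≤ q' ^ ε :=
      Real.rpow_le_rpow (Real.exp_pos _).le hLiou hε.le
    have h2 : Real.exp (ε * q) ^ ε = Real.exp (ε^2 * q) := by
      rw [← Real.exp_mul]; ring_nf
    have h3 := sq_div_four_le_exp (show (0:ℝ) ≤ ε^2 * q by positivity)
    have h4 : 120 * q ≤ (ε^4 * q) * q := mul_le_mul_of_nonneg_right hq120 hq0.le
    have h5 : (ε^2*q)^2 = (ε^4 * q) * q := by ring
    rw [h5] at h3
    rw [h2] at h1
    linarith
  -- conclude
  have hgoal : ((x : ℝ) - (x' : ℝ))/2 * ω - (t : ℝ) * q * ω =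
      (r : ℝ) * ω - (t : ℝ) * q * ω := by rw [hkR]
  rw [ge_iff_le, hgoal]
  have htri := distZ_sub_ge ((r : ℝ) * ω) ((t : ℝ) * q * ω)
  have hb1 : 1/q' ≤ 1/(3*q) := by
    apply one_div_le_one_div_of_le (by linarith) hq'big
  have hb2 : 10/q' ^ ε ≤ 1/(3*q) := by
    rw [div_le_div_iff₀ hq'eps0 (by linarith)]
    linarith
  have : 1/(3*q) ≤ 1/q - 1/q' - 10/q'^ε := by
    have : 1/q = 3 * (1/(3*q)) := by field_simp
    linarith
  linarith
end
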